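/- Let S = S(k_0, k_1, k_2, …) and S' = S(k'_0, k'_1, k'_2, …) be LR-strings in alternating block form. Then r(S) < r(S') if and only if there is an index i with k_j = k'_j for all j < i and, at position i, either i is even and k_i < k'_i, or i is odd and k_i > k'_i (where a missing block is treated via the convention that the string ends). -/

import Mathlib

open List

/-- `r`-value of an LR-string (`true` = R, `false` = L):
`r(ε) = 1`, `r(SL) = r(S) - 2^(-|SL|)`, `r(SR) = r(S) + 2^(-|SR|)`. -/
def rval (S : List Bool) : ℚ :=
  1 + ∑ i ∈ Finset.range S.length,
      (if S.getD i false then ((2:ℚ)^(i+1))⁻¹ else -((2:ℚ)^(i+1))⁻¹)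

/-- Generalized strings: LR-strings plus the formal symbols `R⁻¹ = inv true`
and `L⁻¹ = inv false`. -/
inductive Gen where
  | inv : Bool → Gen
  | str : List Bool → Gen
deriving DecidableEq

/-- Left parent: `P_L(ε) = R⁻¹`, `P_L(SL) = P_L(S)`, `P_L(SR) = S`. -/
def PL (S : List Bool) : Gen :=
  match S.reverse.dropWhile (· = false) with
  | [] => Gen.inv true
  | _ :: t => Gen.str t.reverse

/-- Right parent: `P_R(ε) = L⁻¹`, `P_R(SL) = S`, `P_R(SR) = P_R(S)`. -/
def PR (S : List Bool) : Gen :=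
  match S.reverse.dropWhile (· = true) with
  | [] => Gen.inv false
  | _ :: t => Gen.str t.reverse

/-- Extension of `r` to generalized strings: `r(R⁻¹) = 0`, `r(L⁻¹) = 2`. -/
def rg : Gen → ℚ
  | Gen.inv true => 0
  | Gen.inv false => 2
  | Gen.str S => rval S

/-- Length of a generalized string; the formal symbols have length `-1`. -/
def glen : Gen → ℤ
  | Gen.inv _ => -1
  | Gen.str S => S.length

/-- Position function: `N(ε) = 0`, `N(SL) = 2N(S)+1`, `N(SR) = 2N(S)+2`. -/
def posN (S : List Bool) : ℕ :=
  ∑ i ∈ Finset.range S.length, (if S.getD i false then 2 else 1) * 2^(S.length - 1 - i)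

/-- The alternating-block string `S(k₀,…,k_m) = R^{k₀} L^{k₁} R^{k₂} ⋯`. -/
def blockStr (ks : List ℕ) : List Bool :=
  (ks.zipIdx.map (fun p => List.replicate p.1 (decide (p.2 % 2 = 0)))).flatten

/-- Continued fraction `[q₀,…,q_m]`. -/
def cf : List ℚ → ℚ
  | [] => 0
  | [q] => q
  | q :: qs => q + (cf qs)⁻¹

/-- Admissible continued-fraction index sequences: `[q₀]` with `q₀ ≥ 1`, or
`[q₀,…,q_m]` with `m ≥ 1`, intermediate `qᵢ ≥ 1`, and `q_m ≥ 2`. -/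
def CFAdmissible (qs : List ℕ) : Prop :=
  qs ≠ [] ∧ (qs.length = 1 → 1 ≤ qs.getD 0 0) ∧
    (∀ i, 1 ≤ i → i + 1 < qs.length → 1 ≤ qs.getD i 0) ∧
    (2 ≤ qs.length → 2 ≤ qs.getLastD 0)

/-- The map `f([q₀,…,q_m]) = S(q₀,…,q_{m-1},q_m - 1)`. -/
def cfToStr (qs : List ℕ) : List Bool :=
  blockStr (qs.dropLast ++ [qs.getLastD 0 - 1])

lemma rval_nil : rval [] = 1 := by simp [rval]

lemma rval_cons (b : Bool) (S : List Bool) :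
    rval (b :: S) = (if b then 1 else 0) + rval S / 2 := by
  unfold rval
  rw [List.length_cons, Finset.sum_range_succ']
  simp only [List.getD_cons_succ, List.getD_cons_zero]
  have : ∀ i, (if S.getD i false then ((2:ℚ)^(i+1+1))⁻¹ else -((2:ℚ)^(i+1+1))⁻¹)
      = (if S.getD i false then ((2:ℚ)^(i+1))⁻¹ else -((2:ℚ)^(i+1))⁻¹) / 2 := by
    intro i; split <;> rw [pow_succ] <;> ring
  rw [Finset.sum_congr rfl fun i _ => this i, ← Finset.sum_div]
  cases b <;> simp <;> ring

lemma rval_replicate_true (k : ℕ) : rval (List.replicate k true) = 2 - ((2:ℚ)^k)⁻¹ := by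
  induction k with
  | zero => simp [rval_nil]; norm_num
  | succ n ih => rw [List.replicate_succ, rval_cons, ih, pow_succ]; norm_num; ring

lemma rval_map_not (S : List Bool) : rval (S.map not) = 2 - rval S := by
  induction S with
  | nil => simp [rval_nil]; norm_num
  | cons b S ih =>
    rw [List.map_cons, rval_cons, rval_cons, ih]
    cases b <;> simp <;> ring

lemma rval_append (S T : List Bool) :
    rval (S ++ T) = rval S + ((2:ℚ)^S.length)⁻¹ * (rval T - 1) := by
  induction S with
  | nil => simp [rval_nil]
  | cons b S ih =>
    rw [List.cons_append, rval_cons, rval_cons, ih, List.length_cons, pow_succ]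
    cases b <;> simp <;> ring

def flattenF (s : ℕ) (ks : List ℕ) : List Bool :=
  ((ks.zipIdx s).map (fun p => List.replicate p.1 (decide (p.2 % 2 = 0)))).flatten

lemma flattenF_succ (s : ℕ) (ks : List ℕ) :
    flattenF (s + 1) ks = (flattenF s ks).map not := by
  induction ks generalizing s with
  | nil => simp [flattenF]
  | cons k t ih =>
    have hdec : decide ((s + 1) % 2 = 0) = !decide (s % 2 = 0) := by
      rcases Nat.even_or_odd s with h | h
      · have h1 : s % 2 = 0 := Nat.even_iff.1 h
        have h2 : (s+1) % 2 = 1 := by omega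
        simp [h1, h2]
      · have h1 : s % 2 = 1 := Nat.odd_iff.1 h
        have h2 : (s+1) % 2 = 0 := by omega
        simp [h1, h2]
    simp only [flattenF, List.zipIdx_cons, List.map_cons, List.flatten_cons] at *
    rw [ih (s+1), List.map_append, List.map_replicate, hdec]

lemma blockStr_cons (k : ℕ) (ks : List ℕ) :
    blockStr (k :: ks) = List.replicate k true ++ (blockStr ks).map not := by
  have h0 : ∀ l : List ℕ, blockStr l = flattenF 0 l := by
    intro l; simp [blockStr, flattenF]
  rw [h0, h0, flattenF]
  simp only [List.zipIdx_cons, List.map_cons, List.flatten_cons]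
  norm_num
  have := flattenF_succ 0 ks
  simpa [flattenF] using this

/-- value recursion -/
def G : List ℕ → ℚ
  | [] => 1
  | k :: t => 2 - ((2:ℚ)^k)⁻¹ * G t

lemma rval_blockStr (ks : List ℕ) : rval (blockStr ks) = G ks := by
  induction ks with
  | nil => simp [blockStr, rval_nil, G]
  | cons k t ih =>
    rw [blockStr_cons, rval_append, rval_replicate_true, rval_map_not, ih,
      List.length_replicate, G]
    ring

lemma inv_pow_le_half {k : ℕ} (hk : 1 ≤ k) : ((2:ℚ)^k)⁻¹ ≤ 1/2 := by
  rw [inv_le_comm₀ (by positivity) (by norm_num)]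
  calc ((1:ℚ)/2)⁻¹ = 2^1 := by norm_num
    _ ≤ 2^k := pow_le_pow_right₀ (by norm_num) hk

lemma inv_pow_succ_le {k k' : ℕ} (h : k + 1 ≤ k') : ((2:ℚ)^k')⁻¹ ≤ ((2:ℚ)^(k+1))⁻¹ := by
  apply inv_anti₀ (by positivity)
  exact pow_le_pow_right₀ (by norm_num) h

lemma G_bounds (ks : List ℕ) : 0 < G ks ∧ G ks < 2 := by
  induction ks with
  | nil => norm_num [G]
  | cons k t ih =>
    obtain ⟨h0, h2⟩ := ih
    have hk : ((2:ℚ)^k)⁻¹ ≤ 1 := by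
      rw [inv_le_one_iff₀]; right; exact one_le_pow₀ (by norm_num)
    have hkpos : (0:ℚ) < ((2:ℚ)^k)⁻¹ := by positivity
    have h1 : ((2:ℚ)^k)⁻¹ * G t ≤ G t := by
      calc ((2:ℚ)^k)⁻¹ * G t ≤ 1 * G t := by gcongr
        _ = G t := one_mul _
    constructor
    · simp only [G]; nlinarith
    · simp only [G]; nlinarith

lemma G_pos (ks : List ℕ) : 0 < G ks := (G_bounds ks).1
lemma G_lt_two (ks : List ℕ) : G ks < 2 := (G_bounds ks).2

lemma G_gt_one (ks : List ℕ) (hne : ks ≠ []) (h : ∀ x ∈ ks, 1 ≤ x) : 1 < G ks := by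
  cases ks with
  | nil => exact absurd rfl hne
  | cons k t =>
    have hk : 1 ≤ k := h k List.mem_cons_self
    have h1 : ((2:ℚ)^k)⁻¹ ≤ 1/2 := inv_pow_le_half hk
    have h2 := G_lt_two t
    have h3 := G_pos t
    have : ((2:ℚ)^k)⁻¹ * G t < 1 := by nlinarith
    simp only [G]; linarith

lemma G_ge_one (ks : List ℕ) (h : ∀ x ∈ ks, 1 ≤ x) : 1 ≤ G ks := by
  cases ks with
  | nil => simp [G]
  | cons k t => exact le_of_lt (G_gt_one _ (by simp) h)

/-- head-lt comparison -/
lemma G_lt_head (k k' : ℕ) (t t' : List ℕ) (hk : k < k') (ht : ∀ x ∈ t, 1 ≤ x) :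
    G (k :: t) < G (k' :: t') := by
  have h1 : ((2:ℚ)^k')⁻¹ * G t' < ((2:ℚ)^k')⁻¹ * 2 :=
    mul_lt_mul_of_pos_left (G_lt_two t') (by positivity)
  have h2 : ((2:ℚ)^k')⁻¹ * 2 ≤ ((2:ℚ)^(k+1))⁻¹ * 2 := by
    have := inv_pow_succ_le (k := k) (k' := k') (by omega)
    linarith
  have h3 : ((2:ℚ)^(k+1))⁻¹ * 2 = ((2:ℚ)^k)⁻¹ := by
    rw [pow_succ, mul_inv]
    have : ((2:ℚ))⁻¹ * 2 = 1 := by norm_num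
    rw [mul_assoc, this, mul_one]
  have h4 : ((2:ℚ)^k)⁻¹ ≤ ((2:ℚ)^k)⁻¹ * G t :=
    le_mul_of_one_le_right (by positivity) (G_ge_one t ht)
  simp only [G]
  linarith

def ALT (ks ks' : List ℕ) : Prop :=
  ∃ i : ℕ, (∀ j < i, ks.getD j 0 = ks'.getD j 0) ∧
    ((Even i ∧ ks.getD i 0 < ks'.getD i 0) ∨ (Odd i ∧ ks'.getD i 0 < ks.getD i 0))

lemma getD_pos_lt_length {l : List ℕ} {i : ℕ} (h : 0 < l.getD i 0) : i < l.length := by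
  by_contra hc
  rw [List.getD_eq_default _ _ (by omega)] at h
  omega

lemma head_ge_one {l : List ℕ} (hne : l ≠ []) (h : ∀ x ∈ l, 1 ≤ x) : 1 ≤ l.getD 0 0 := by
  cases l with
  | nil => exact absurd rfl hne
  | cons a t => simpa using h a List.mem_cons_self

lemma ALT_nil_nil : ¬ ALT [] [] := by
  rintro ⟨i, _, ⟨_, hlt⟩ | ⟨_, hlt⟩⟩ <;> simp at hlt

lemma ALT_nil_cons (k' : ℕ) (t' : List ℕ) (ht' : ∀ x ∈ t', 1 ≤ x) :
    ALT [] (k' :: t') ↔ 1 ≤ k' := by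
  constructor
  · rintro ⟨i, hj, ⟨he, hlt⟩ | ⟨ho, hlt⟩⟩
    · simp only [List.getD_nil] at hlt
      by_contra hk
      have hk0 : k' = 0 := by omega
      match i, he with
      | 0, _ => simp [hk0] at hlt
      | (j+2), _ =>
        have h1 := hj 1 (by omega)
        simp only [List.getD_nil, List.getD_cons_succ] at h1
        have hlt' : 0 < t'.getD (j+1) 0 := by simpa [List.getD_cons_succ] using hlt
        have hlen := getD_pos_lt_length hlt'
        have : t' ≠ [] := by intro h; simp [h] at hlen
        have := head_ge_one this ht'
        omega
      | 1, he => exact absurd he (by simp [Nat.even_iff])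
    · simp only [List.getD_nil] at hlt; omega
  · intro hk'
    exact ⟨0, by omega, Or.inl ⟨Even.zero, by simp; omega⟩⟩

lemma ALT_cons_nil (k : ℕ) (t : List ℕ) (ht : ∀ x ∈ t, 1 ≤ x) :
    ALT (k :: t) [] ↔ (k = 0 ∧ t ≠ []) := by
  constructor
  · rintro ⟨i, hj, ⟨he, hlt⟩ | ⟨ho, hlt⟩⟩
    · simp only [List.getD_nil] at hlt; omega
    · simp only [List.getD_nil] at hlt
      match i, ho with
      | 0, ho => exact absurd ho (by simp [Nat.odd_iff])
      | (j+1), _ =>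
        have h0 := hj 0 (by omega)
        simp only [List.getD_nil, List.getD_cons_zero] at h0
        have hlt' : 0 < t.getD j 0 := by simpa [List.getD_cons_succ] using hlt
        have hlen := getD_pos_lt_length hlt'
        refine ⟨h0, ?_⟩
        intro h; simp [h] at hlen
  · rintro ⟨rfl, hne⟩
    refine ⟨1, ?_, Or.inr ⟨by simp [Nat.odd_iff], ?_⟩⟩
    · intro j hj
      interval_cases j
      simp
    · simp only [List.getD_nil, List.getD_cons_succ]
      have := head_ge_one hne ht
      omega

lemma not_ALT_cons_cons_gt (k k' : ℕ) (t t' : List ℕ) (hk : k' < k) :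
    ¬ ALT (k :: t) (k' :: t') := by
  rintro ⟨i, hj, ⟨he, hlt⟩ | ⟨ho, hlt⟩⟩
  · match i with
    | 0 => simp only [List.getD_cons_zero] at hlt; omega
    | (j+1) =>
      have h0 := hj 0 (by omega)
      simp only [List.getD_cons_zero] at h0
      omega
  · match i with
    | 0 => exact absurd ho (by simp [Nat.odd_iff])
    | (j+1) =>
      have h0 := hj 0 (by omega)
      simp only [List.getD_cons_zero] at h0
      omega

lemma ALT_cons_cons_eq (k : ℕ) (t t' : List ℕ) :
    ALT (k :: t) (k :: t') ↔ ALT t' t := by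
  constructor
  · rintro ⟨i, hj, hc⟩
    match i with
    | 0 =>
      rcases hc with ⟨_, hlt⟩ | ⟨ho, _⟩
      · simp only [List.getD_cons_zero] at hlt; omega
      · exact absurd ho (by simp [Nat.odd_iff])
    | (j+1) =>
      refine ⟨j, ?_, ?_⟩
      · intro j' hj'
        have := hj (j'+1) (by omega)
        simpa using this.symm
      · rcases hc with ⟨he, hlt⟩ | ⟨ho, hlt⟩
        · right
          refine ⟨Nat.not_even_iff_odd.1 (Nat.even_add_one.1 he), ?_⟩
          simpa using hlt
        · left
          refine ⟨Nat.not_odd_iff_even.1 (Nat.odd_add_one.1 ho), ?_⟩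
          simpa using hlt
  · rintro ⟨j, hj, hc⟩
    refine ⟨j+1, ?_, ?_⟩
    · intro j' hj'
      match j' with
      | 0 => simp
      | (i+1) =>
        have := hj i (by omega)
        simpa using this.symm
    · rcases hc with ⟨he, hlt⟩ | ⟨ho, hlt⟩
      · right
        refine ⟨Nat.odd_add_one.2 (Nat.not_odd_iff_even.2 he), ?_⟩
        simpa using hlt
      · left
        refine ⟨Nat.even_add_one.2 (Nat.not_even_iff_odd.2 ho), ?_⟩
        simpa using hlt

lemma G_main : ∀ n ks ks', ks.length + ks'.length ≤ n →
    (∀ x ∈ ks.tail, 1 ≤ x) → (∀ x ∈ ks'.tail, 1 ≤ x) →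
    (G ks < G ks' ↔ ALT ks ks') := by
  intro n
  induction n with
  | zero =>
    intro ks ks' hlen _ _
    have h1 : ks = [] := List.length_eq_zero_iff.1 (by omega)
    have h2 : ks' = [] := List.length_eq_zero_iff.1 (by omega)
    subst h1; subst h2
    simp [G, ALT_nil_nil]
  | succ n ih =>
    intro ks ks' hlen h h'
    match ks, ks' with
    | [], [] => simp [G, ALT_nil_nil]
    | [], k' :: t' =>
      have ht' : ∀ x ∈ t', 1 ≤ x := by simpa using h'
      rw [ALT_nil_cons k' t' ht']
      simp only [G]
      constructor
      · intro hlt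
        by_contra hk
        have hk0 : k' = 0 := by omega
        subst hk0
        have := G_ge_one t' ht'
        simp at hlt
        linarith
      · intro hk'
        have h1 : ((2:ℚ)^k')⁻¹ ≤ 1/2 := inv_pow_le_half hk'
        have h2 := G_lt_two t'
        have h3 := G_pos t'
        have : ((2:ℚ)^k')⁻¹ * G t' < 1 := by nlinarith
        linarith
    | k :: t, [] =>
      have ht : ∀ x ∈ t, 1 ≤ x := by simpa using h
      rw [ALT_cons_nil k t ht]
      simp only [G]
      constructor
      · intro hlt
        have h2 := G_lt_two t
        have h3 := G_pos t
        constructor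
        · by_contra hk
          have h1 : ((2:ℚ)^k)⁻¹ ≤ 1/2 := inv_pow_le_half (by omega)
          nlinarith
        · intro hte
          subst hte
          simp only [G] at hlt
          have hk1 : ((2:ℚ)^k)⁻¹ ≤ 1 := by
            rw [inv_le_one_iff₀]; right; exact one_le_pow₀ (by norm_num)
          nlinarith
      · rintro ⟨rfl, hne⟩
        have := G_gt_one t hne ht
        simp
        linarith
    | k :: t, k' :: t' =>
      have ht : ∀ x ∈ t, 1 ≤ x := by simpa using h
      have ht' : ∀ x ∈ t', 1 ≤ x := by simpa using h'
      rcases lt_trichotomy k k' with hkk | hkk | hkk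
      · constructor
        · intro _; exact ⟨0, by omega, Or.inl ⟨Even.zero, by simpa using hkk⟩⟩
        · intro _; exact G_lt_head k k' t t' hkk ht
      · subst hkk
        rw [ALT_cons_cons_eq]
        have hGt : G (k :: t) < G (k :: t') ↔ G t' < G t := by
          simp only [G]
          have hp : (0:ℚ) < ((2:ℚ)^k)⁻¹ := by positivity
          constructor
          · intro hx
            have : ((2:ℚ)^k)⁻¹ * G t' < ((2:ℚ)^k)⁻¹ * G t := by linarith
            exact lt_of_mul_lt_mul_left this (le_of_lt hp)
          · intro hx
            have : ((2:ℚ)^k)⁻¹ * G t' < ((2:ℚ)^k)⁻¹ * G t := by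
              exact mul_lt_mul_of_pos_left hx hp
            linarith
        rw [hGt]
        refine ih t' t ?_ ?_ ?_
        · simp at hlen ⊢; omega
        · intro x hx; exact ht' x (List.mem_of_mem_tail hx)
        · intro x hx; exact ht x (List.mem_of_mem_tail hx)
      · constructor
        · intro hlt
          have := G_lt_head k' k t' t hkk ht'
          linarith
        · intro hA
          exact absurd hA (not_ALT_cons_cons_gt k k' t t' hkk)

/-- Corollary 2.5(b): `r(S) < r(S')` iff the block-exponent sequences compare in
the alternating lexicographic order: at the first differing index `i`, either
`i` is even and `kᵢ < k'ᵢ`, or `i` is odd and `kᵢ > k'ᵢ` (a missing block is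
treated as exponent `0`, i.e. the string ends). -/
theorem stmt13 (ks ks' : List ℕ) (hne : ks ≠ []) (hne' : ks' ≠ [])
    (hpos : ∀ i, 1 ≤ i → i < ks.length → 1 ≤ ks.getD i 0)
    (hpos' : ∀ i, 1 ≤ i → i < ks'.length → 1 ≤ ks'.getD i 0) :
    rval (blockStr ks) < rval (blockStr ks') ↔
      ∃ i : ℕ, (∀ j < i, ks.getD j 0 = ks'.getD j 0) ∧
        ((Even i ∧ ks.getD i 0 < ks'.getD i 0) ∨
          (Odd i ∧ ks'.getD i 0 < ks.getD i 0)) := by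
  have hT : ∀ (l : List ℕ), (∀ i, 1 ≤ i → i < l.length → 1 ≤ l.getD i 0) →
      ∀ x ∈ l.tail, 1 ≤ x := by
    intro l hp x hx
    obtain ⟨j, hj, rfl⟩ := List.mem_iff_getElem.1 hx
    have hl : j + 1 < l.length := by
      rw [List.length_tail] at hj; omega
    have := hp (j+1) (by omega) hl
    rw [List.getD_eq_getElem l 0 hl] at this
    rw [List.getElem_tail]
    exact this
  rw [rval_blockStr, rval_blockStr]
  exact G_main (ks.length + ks'.length) ks ks' le_rfl (hT ks hpos) (hT ks' hpos')
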